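/- Let p ≥ 1 be a natural number and let F_p = {y ∈ ℝ | ∃ m e : ℤ, |m| < 2^p ∧ y = m·2^e}. Let m, e be integers with m ≠ 0, and let s = m·2^e. Then every breakpoint b of F_p with b ≠ s satisfies |s − b| ≥ 2^(e − p − 1). -/
import Mathlib

/-- An element of `F` of magnitude at least `2^(e-1)` lies on the grid `2^(e-p)·ℤ`. -/
private lemma stmt_10_grid (p : ℕ) (e : ℤ) (m₁ e₁ : ℤ) (hm : |m₁| < 2 ^ p)
    (hge : (2:ℝ) ^ (e - 1) ≤ (m₁ : ℝ) * (2:ℝ) ^ e₁) :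
    ∃ n : ℤ, (m₁ : ℝ) * (2:ℝ) ^ e₁ = (n : ℝ) * (2:ℝ) ^ (e - (p:ℤ)) := by
  have h2 : (0:ℝ) < 2 := by norm_num
  have hz : (0:ℝ) < (2:ℝ) ^ e₁ := zpow_pos h2 _
  have h1 : (m₁ : ℝ) * (2:ℝ) ^ e₁ ≤ |(m₁:ℝ)| * (2:ℝ) ^ e₁ := by
    have := le_abs_self (m₁ : ℝ)
    nlinarith
  have habs : |(m₁:ℝ)| < (2:ℝ) ^ (p:ℤ) := by
    rw [← Int.cast_abs]
    calc ((|m₁| : ℤ) : ℝ) < ((2 ^ p : ℤ) : ℝ) := by exact_mod_cast hm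
    _ = (2:ℝ) ^ (p:ℤ) := by push_cast [zpow_natCast]; ring
  have h3 : (2:ℝ) ^ (e - 1) < (2:ℝ) ^ ((p:ℤ) + e₁) := by
    calc (2:ℝ) ^ (e - 1) ≤ (m₁ : ℝ) * (2:ℝ) ^ e₁ := hge
      _ ≤ |(m₁:ℝ)| * (2:ℝ) ^ e₁ := h1
      _ < (2:ℝ) ^ (p:ℤ) * (2:ℝ) ^ e₁ := by nlinarith
      _ = (2:ℝ) ^ ((p:ℤ) + e₁) := (zpow_add₀ (by norm_num) _ _).symm
  have hle : e - (p:ℤ) ≤ e₁ := by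
    have := (zpow_lt_zpow_iff_right₀ (one_lt_two (α := ℝ))).mp h3
    omega
  refine ⟨m₁ * 2 ^ (e₁ - (e - (p:ℤ))).toNat, ?_⟩
  have ht : ((e₁ - (e - (p:ℤ))).toNat : ℤ) = e₁ - (e - (p:ℤ)) := Int.toNat_of_nonneg (by omega)
  push_cast
  rw [← zpow_natCast (2:ℝ) (e₁ - (e - (p:ℤ))).toNat, ht, mul_assoc,
    ← zpow_add₀ (two_ne_zero (α := ℝ))]
  ring_nf

/-- A breakpoint larger than `2^e - 2^(e-p-1)` lies on the grid `2^(e-p-1)·ℤ`. -/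
private lemma stmt_10_aux (p : ℕ) (hp : 1 ≤ p)
    (F : Set ℝ) (hF : F = {y : ℝ | ∃ m e : ℤ, |m| < 2 ^ p ∧ y = (m : ℝ) * (2 : ℝ) ^ e})
    (e : ℤ) (b : ℝ)
    (hb : ∃ f g : ℝ, f ∈ F ∧ g ∈ F ∧ f ≠ g ∧
      (∀ u ∈ F, |b - f| ≤ |b - u|) ∧ (∀ u ∈ F, |b - g| ≤ |b - u|))
    (hbig : (2:ℝ) ^ e - (2:ℝ) ^ (e - (p:ℤ) - 1) < b) :
    ∃ N : ℤ, b = (N : ℝ) * (2:ℝ) ^ (e - (p:ℤ) - 1) := by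
  obtain ⟨f, g, hfF, hgF, hfg, hnf, hng⟩ := hb
  have h2 : (0:ℝ) < 2 := by norm_num
  have h21 : (2:ℤ) ≤ 2 ^ p := by
    calc (2:ℤ) = 2 ^ 1 := (pow_one 2).symm
    _ ≤ 2 ^ p := pow_le_pow_right₀ (by norm_num) hp
  have hpowF : ∀ n : ℤ, (2:ℝ) ^ n ∈ F := by
    intro n
    rw [hF]
    exact ⟨1, n, by rw [abs_one]; omega, by push_cast; ring⟩
  -- the two distances agree
  obtain ⟨d, hdd⟩ : ∃ d, d = |b - f| := ⟨_, rfl⟩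
  have hd : |b - g| = d := by
    rw [hdd]; exact le_antisymm (hng f hfF) (hnf g hgF)
  have hnf' : ∀ u ∈ F, d ≤ |b - u| := fun u hu => hdd ▸ hnf u hu
  have hd0 : 0 < d := by
    rcases (abs_nonneg (b - f)).lt_or_eq with h | h
    · rw [hdd]; exact h
    · exfalso
      have hf : b = f := by have := abs_eq_zero.mp h.symm; linarith
      have hg : b = g := by
        have : |b - g| = 0 := by rw [hd, hdd, ← h]
        have := abs_eq_zero.mp this; linarith
      exact hfg (hf ▸ hg ▸ rfl)
  -- basic power facts
  have hsmall : (2:ℝ) ^ (e - (p:ℤ) - 1) ≤ (2:ℝ) ^ (e - 1) :=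
    zpow_le_zpow_right₀ one_le_two (by omega)
  have h2e : (2:ℝ) ^ e = (2:ℝ) ^ (e - 1) * 2 := by
    rw [← zpow_add_one₀ (two_ne_zero (α := ℝ))]; ring_nf
  have hb0 : 0 < b := by
    have h5 : (0:ℝ) < (2:ℝ) ^ (e-1) := zpow_pos h2 _
    nlinarith
  obtain ⟨k, hk1, hk2⟩ := exists_mem_Ico_zpow hb0 (one_lt_two (α := ℝ))
  -- d is at most half the binade width
  have h2k : (2:ℝ) ^ (k+1) = (2:ℝ) ^ k * 2 := by
    rw [← zpow_add_one₀ (two_ne_zero (α := ℝ))]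
  have hdlo : d ≤ b - (2:ℝ) ^ k := by
    have := hnf' _ (hpowF k)
    rwa [abs_of_nonneg (by linarith)] at this
  have hdhi : d ≤ (2:ℝ) ^ (k+1) - b := by
    have := hnf' _ (hpowF (k+1))
    rwa [abs_of_nonpos (by linarith), neg_sub] at this
  -- f and g straddle b at distance d
  have hfval : f = b - d ∨ f = b + d := by
    rcases abs_cases (b - f) with ⟨h, _⟩ | ⟨h, _⟩
    · left; rw [hdd, h]; ring
    · right; rw [hdd, h]; ring
  have hgval : g = b - d ∨ g = b + d := by
    rcases abs_cases (b - g) with ⟨h, _⟩ | ⟨h, _⟩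
    · left; rw [← hd, h]; ring
    · right; rw [← hd, h]; ring
  -- both f and g are at least 2^(e-1)
  have hbd : (2:ℝ) ^ (e - 1) ≤ b - d := by
    rcases le_or_gt e k with hek | hek
    · have hek2 : (2:ℝ) ^ e ≤ (2:ℝ) ^ k := zpow_le_zpow_right₀ one_le_two hek
      linarith
    · -- k < e, so b < 2^(k+1) ≤ 2^e, and d ≤ 2^e - b < 2^(e-p-1)
      have hbe : b < (2:ℝ) ^ e := lt_of_lt_of_le hk2 (zpow_le_zpow_right₀ one_le_two (by omega))
      have hde : d ≤ (2:ℝ) ^ e - b := by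
        have := hnf' _ (hpowF e)
        rwa [abs_of_nonpos (by linarith), neg_sub] at this
      have hep : (2:ℝ) ^ (e - (p:ℤ)) ≤ (2:ℝ) ^ (e - 1) :=
        zpow_le_zpow_right₀ one_le_two (by omega)
      have hsplit : (2:ℝ) ^ (e - (p:ℤ)) = (2:ℝ) ^ (e - (p:ℤ) - 1) * 2 := by
        rw [← zpow_add_one₀ (two_ne_zero (α := ℝ))]; ring_nf
      linarith
  -- apply grid lemma to f and g
  have hgrid : ∀ x ∈ F, (2:ℝ) ^ (e-1) ≤ x → ∃ n : ℤ, x = (n:ℝ) * (2:ℝ) ^ (e - (p:ℤ)) := by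
    intro x hx hxe
    rw [hF] at hx
    obtain ⟨m₁, e₁, hm₁, hx₁⟩ := hx
    subst hx₁
    exact stmt_10_grid p e m₁ e₁ hm₁ hxe
  have hfge : (2:ℝ) ^ (e-1) ≤ f := by rcases hfval with h | h <;> (rw [h]; linarith)
  have hgge : (2:ℝ) ^ (e-1) ≤ g := by rcases hgval with h | h <;> (rw [h]; linarith)
  obtain ⟨n₁, hn₁⟩ := hgrid f hfF hfge
  obtain ⟨n₂, hn₂⟩ := hgrid g hgF hgge
  -- b = (f+g)/2
  have hsum : f + g = 2 * b := by
    rcases hfval with h | h <;> rcases hgval with h' | h' <;>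
      first
      | (exfalso; exact hfg (h ▸ h' ▸ rfl))
      | (rw [h, h']; ring)
  refine ⟨n₁ + n₂, ?_⟩
  have hsplit : (2:ℝ) ^ (e - (p:ℤ)) = (2:ℝ) ^ (e - (p:ℤ) - 1) * 2 := by
    rw [← zpow_add_one₀ (two_ne_zero (α := ℝ))]; ring_nf
  have : (2:ℝ) * b = ((n₁ + n₂ : ℤ) : ℝ) * ((2:ℝ) ^ (e - (p:ℤ) - 1) * 2) := by
    push_cast
    rw [← hsplit]
    linarith [hn₁, hn₂, hsum]
  linarith

/-- Any breakpoint `b` of the set of `p`-bit floating-point values that differs from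
`s = m·2^e` (with `m ≠ 0`) satisfies `|s - b| ≥ 2^(e - p - 1)`. -/
theorem stmt_10 (p : ℕ) (hp : 1 ≤ p)
    (F : Set ℝ) (hF : F = {y : ℝ | ∃ m e : ℤ, |m| < 2 ^ p ∧ y = (m : ℝ) * (2 : ℝ) ^ e})
    (m e : ℤ) (hm : m ≠ 0) (s : ℝ) (hs : s = (m : ℝ) * (2 : ℝ) ^ e)
    (b : ℝ)
    (hb : ∃ f g : ℝ, f ∈ F ∧ g ∈ F ∧ f ≠ g ∧
      (∀ u ∈ F, |b - f| ≤ |b - u|) ∧ (∀ u ∈ F, |b - g| ≤ |b - u|))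
    (hbs : b ≠ s) :
    (2 : ℝ) ^ (e - (p : ℤ) - 1) ≤ |s - b| := by
  set ε : ℝ := (2:ℝ) ^ (e - (p:ℤ) - 1) with hε
  have h2 : (0:ℝ) < 2 := by norm_num
  have hε0 : 0 < ε := zpow_pos h2 _
  -- s lies on the grid ε·ℤ
  have hsgrid : s = ((m * 2 ^ (p+1) : ℤ) : ℝ) * ε := by
    rw [hs, hε]
    push_cast
    rw [mul_assoc, ← zpow_natCast (2:ℝ) (p+1), ← zpow_add₀ (two_ne_zero (α := ℝ))]
    norm_num
  have hsabs : (2:ℝ) ^ e ≤ |s| := by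
    rw [hs, abs_mul]
    have h1 : (1:ℝ) ≤ |(m:ℝ)| := by
      rw [← Int.cast_abs]
      exact_mod_cast Int.one_le_abs hm
    have hz : (0:ℝ) < (2:ℝ) ^ e := zpow_pos h2 _
    rw [abs_of_pos hz]
    nlinarith
  by_cases hcase : |b| ≤ (2:ℝ) ^ e - ε
  · -- triangle inequality case
    calc ε ≤ |s| - |b| := by linarith
      _ ≤ |s - b| := by
        have := abs_sub_abs_le_abs_sub s b
        linarith
  · push_neg at hcase
    -- b (or -b) satisfies the hypotheses of the aux lemma
    have hbgrid : ∃ N : ℤ, b = (N:ℝ) * ε := by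
      rcases le_or_gt b 0 with hb0 | hb0
      · -- apply aux to -b
        obtain ⟨f, g, hfF, hgF, hfg, hnf, hng⟩ := hb
        have hnegF : ∀ u ∈ F, -u ∈ F := by
          intro u hu
          rw [hF] at hu ⊢
          obtain ⟨m₁, e₁, hm₁, hu₁⟩ := hu
          exact ⟨-m₁, e₁, by simpa using hm₁, by rw [hu₁]; push_cast; ring⟩
        have key : ∀ h : ℝ, (∀ u ∈ F, |b - h| ≤ |b - u|) →
            ∀ u ∈ F, |(-b) - (-h)| ≤ |(-b) - u| := by
          intro h hn u hu
          rw [show (-b) - (-h) = -(b - h) by ring, abs_neg,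
              show (-b) - u = -(b - (-u)) by ring, abs_neg]
          exact hn _ (hnegF u hu)
        have hb' : ∃ f g : ℝ, f ∈ F ∧ g ∈ F ∧ f ≠ g ∧
            (∀ u ∈ F, |(-b) - f| ≤ |(-b) - u|) ∧ (∀ u ∈ F, |(-b) - g| ≤ |(-b) - u|) :=
          ⟨-f, -g, hnegF f hfF, hnegF g hgF, by simpa using hfg, key f hnf, key g hng⟩
        have habs : (2:ℝ) ^ e - ε < -b := by
          rw [abs_of_nonpos hb0] at hcase
          linarith
        obtain ⟨N, hN⟩ := stmt_10_aux p hp F hF e (-b) hb' habs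
        exact ⟨-N, by push_cast; linarith⟩
      · have habs : (2:ℝ) ^ e - ε < b := by rw [abs_of_pos hb0] at hcase; linarith
        exact stmt_10_aux p hp F hF e b hb habs
    obtain ⟨N, hN⟩ := hbgrid
    set M : ℤ := m * 2 ^ (p+1) with hM
    have hNM : N ≠ M := by
      intro h
      exact hbs (by rw [hN, hsgrid, h])
    have heq : |s - b| = |((M - N : ℤ) : ℝ)| * ε := by
      rw [hsgrid, hN, ← sub_mul, abs_mul, abs_of_pos hε0]
      push_cast
      ring_nf
    rw [heq]
    have h1 : (1:ℝ) ≤ |((M - N : ℤ) : ℝ)| := by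
      rw [← Int.cast_abs]
      exact_mod_cast Int.one_le_abs (by omega)
    nlinarith
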